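/- Let 𝐖 = (o → o) → (o → o) → o → o be the Church type of binary strings and 𝐁 = o → o → o the Church type of booleans. Every language 𝓛 ⊆ {0,1}* decided by a closed simply-typed λ-term M of type 𝐖 → 𝐁 (in the sense that for every binary string s with Church encoding s̄ : 𝐖, s ∈ 𝓛 iff M s̄ =βη 𝐭𝐫𝐮𝐞) belongs to 𝐋𝐢𝐧𝐓𝐈𝐌𝐄, deterministic linear time. -/

import Mathlib

/-! Simple types over a base type `o`, and the relational semantics
(non-idempotent intersection types): `o` is interpreted by a countably
infinite set of atoms (here `ℕ`), and `σ → τ` by finite multisets over the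
web of `σ` paired with the web of `τ`. -/

/-- Simple types over the base type `o`. -/
inductive Ty : Type
  | o : Ty
  | arrow : Ty → Ty → Ty

/-- The relational web of a simple type. -/
def Web : Ty → Type
  | .o => ℕ
  | .arrow σ τ => Multiset (Web σ) × Web τ

/-- Typed de Bruijn variables. -/
inductive Var : List Ty → Ty → Type
  | zero {Γ σ} : Var (σ :: Γ) σ
  | succ {Γ σ τ} : Var Γ σ → Var (τ :: Γ) σ

/-- Intrinsically simply-typed λ-terms. -/
inductive Tm : List Ty → Ty → Type
  | var {Γ σ} : Var Γ σ → Tm Γ σ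
  | lam {Γ σ τ} : Tm (σ :: Γ) τ → Tm Γ (Ty.arrow σ τ)
  | app {Γ σ τ} : Tm Γ (Ty.arrow σ τ) → Tm Γ σ → Tm Γ τ

/-- Renamings between contexts. -/
def Ren (Γ Δ : List Ty) : Type := ∀ σ, Var Γ σ → Var Δ σ

/-- Lifting a renaming under a binder. -/
def Ren.lift {Γ Δ : List Ty} (ρ : Ren Γ Δ) (τ : Ty) : Ren (τ :: Γ) (τ :: Δ) :=
  fun _ v =>
    match v with
    | .zero => .zero
    | .succ w => .succ (ρ _ w)

/-- Applying a renaming to a term. -/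
def rename : {Γ Δ : List Ty} → Ren Γ Δ → {σ : Ty} → Tm Γ σ → Tm Δ σ
  | _, _, ρ, _, .var v => .var (ρ _ v)
  | _, _, ρ, _, .lam M => .lam (rename (Ren.lift ρ _) M)
  | _, _, ρ, _, .app M N => .app (rename ρ M) (rename ρ N)

/-- Substitutions between contexts. -/
def Subst (Γ Δ : List Ty) : Type := ∀ σ, Var Γ σ → Tm Δ σ

/-- Lifting a substitution under a binder. -/
def Subst.lift {Γ Δ : List Ty} (s : Subst Γ Δ) (τ : Ty) : Subst (τ :: Γ) (τ :: Δ) :=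
  fun _ v =>
    match v with
    | .zero => .var .zero
    | .succ w => rename (fun _ u => Var.succ u) (s _ w)

/-- Applying a substitution to a term. -/
def subst : {Γ Δ : List Ty} → Subst Γ Δ → {σ : Ty} → Tm Γ σ → Tm Δ σ
  | _, _, s, _, .var v => s _ v
  | _, _, s, _, .lam M => .lam (subst (Subst.lift s _) M)
  | _, _, s, _, .app M N => .app (subst s M) (subst s N)

/-- The substitution replacing the last variable by `N`. -/
def Subst.cons {Γ : List Ty} {σ : Ty} (N : Tm Γ σ) : Subst (σ :: Γ) Γ :=
  fun _ v =>
    match v with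
    | .zero => N
    | .succ w => .var w

/-- Substitution of the last variable. -/
def subst1 {Γ : List Ty} {σ τ : Ty} (M : Tm (σ :: Γ) τ) (N : Tm Γ σ) : Tm Γ τ :=
  subst (Subst.cons N) M

/-- βη-convertibility of simply-typed λ-terms. -/
inductive BetaEta : {Γ : List Ty} → {σ : Ty} → Tm Γ σ → Tm Γ σ → Prop
  | refl {Γ σ} (M : Tm Γ σ) : BetaEta M M
  | symm {Γ σ} {M N : Tm Γ σ} : BetaEta M N → BetaEta N M
  | trans {Γ σ} {M N P : Tm Γ σ} : BetaEta M N → BetaEta N P → BetaEta M P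
  | app_congr {Γ σ τ} {M M' : Tm Γ (Ty.arrow σ τ)} {N N' : Tm Γ σ} :
      BetaEta M M' → BetaEta N N' → BetaEta (M.app N) (M'.app N')
  | lam_congr {Γ σ τ} {M M' : Tm (σ :: Γ) τ} : BetaEta M M' → BetaEta M.lam M'.lam
  | beta {Γ σ τ} (M : Tm (σ :: Γ) τ) (N : Tm Γ σ) : BetaEta (Tm.app M.lam N) (subst1 M N)
  | eta {Γ σ τ} (M : Tm Γ (Ty.arrow σ τ)) :
      BetaEta M (Tm.lam (Tm.app (rename (fun _ v => Var.succ v) M) (Tm.var Var.zero)))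

/-- Relational environments: a finite multiset over the web of `σ` for each
variable of type `σ` in the context. -/
def REnv (Γ : List Ty) : Type := ∀ σ, Var Γ σ → Multiset (Web σ)

/-- Extending a relational environment. -/
def REnv.cons {Γ : List Ty} {σ : Ty} (X : Multiset (Web σ)) (ρ : REnv Γ) :
    REnv (σ :: Γ) :=
  fun _ v =>
    match v with
    | .zero => X
    | .succ w => ρ _ w

/-- The empty relational environment. -/
def REnv.nil : REnv [] := fun _ v => nomatch v

/-- The relational semantics of a typing sequent: `Sem M ρ α` means that the
tuple `(ρ, α)` belongs to the relational interpretation `⟦x̄:σ̄ ⊢ M : σ⟧`. -/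
def Sem : {Γ : List Ty} → {σ : Ty} → Tm Γ σ → REnv Γ → Web σ → Prop
  | _, _, .var v, ρ, α => α ∈ ρ _ v
  | _, _, .lam M, ρ, α => Sem M (REnv.cons α.1 ρ) α.2
  | _, _, @Tm.app _ σ _ M N, ρ, α =>
      ∃ Y : Multiset (Web σ), Sem M ρ (Y, α) ∧ ∀ β ∈ Y, Sem N ρ β

/-- `RelType M α σ` (written `⊳ M : α : σ` in the paper): the point `α`
belongs to the relational interpretation of the closed term `M : σ`. -/
def RelType {σ : Ty} (M : Tm [] σ) (α : Web σ) : Prop := Sem M REnv.nil α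

/-- The Church type of booleans `𝐁 = o → o → o`. -/
def TyB : Ty := Ty.arrow .o (Ty.arrow .o .o)

/-- The Church boolean `𝐭𝐫𝐮𝐞 = λx y. x`. -/
def churchTrue : Tm [] TyB := .lam (.lam (.var (.succ .zero)))

/-- The Church boolean `𝐟𝐚𝐥𝐬𝐞 = λx y. y`. -/
def churchFalse : Tm [] TyB := .lam (.lam (.var .zero))

/-- The relational point `[∗] → ∅ → ∗` of the type `𝐁`. -/
def boolPoint (ast : Web Ty.o) : Web TyB := ({ast}, (0, ast))

/-- The Church type of binary strings `𝐖 = (o → o) → (o → o) → o → o`. -/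
def TyW : Ty := Ty.arrow (Ty.arrow .o .o) (Ty.arrow (Ty.arrow .o .o) (Ty.arrow .o .o))

/-- The body of the Church encoding of a binary string: for each bit, apply
the first argument (for `0` = `false`) or the second (for `1` = `true`), in
order, to the last argument. -/
def churchBits : List Bool → Tm [Ty.o, Ty.arrow .o .o, Ty.arrow .o .o] Ty.o
  | [] => .var .zero
  | b :: s =>
      .app (if b then .var (.succ .zero) else .var (.succ (.succ .zero))) (churchBits s)

/-- The Church encoding `s̄ : 𝐖` of a binary string `s`. -/
def churchStr (s : List Bool) : Tm [] TyW := .lam (.lam (.lam (churchBits s)))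

/-- The evident finite encoding of binary strings over the alphabet `Bool`. -/
def finEncodingListBool : Computability.Encoding (List Bool) Bool where
  encode := id
  decode := fun l => some l
  decode_encode := fun _ => rfl

/-! ### Auxiliary development -/

/-- The full set-theoretic model over base set `Bool`. -/
def TyD : Ty → Type
  | .o => Bool
  | .arrow σ τ => TyD σ → TyD τ

def SEnv (Γ : List Ty) : Type := ∀ σ, Var Γ σ → TyD σ

def SEnv.cons {Γ : List Ty} {σ : Ty} (a : TyD σ) (η : SEnv Γ) : SEnv (σ :: Γ) :=
  fun _ v =>
    match v with
    | .zero => a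
    | .succ w => η _ w

def SEnv.nil : SEnv [] := fun _ v => nomatch v

def evalTm : {Γ : List Ty} → {σ : Ty} → Tm Γ σ → SEnv Γ → TyD σ
  | _, _, .var v, η => η _ v
  | _, _, .lam M, η => fun a => evalTm M (SEnv.cons a η)
  | _, _, .app M N, η => evalTm M η (evalTm N η)

theorem eval_rename : ∀ {Γ Δ : List Ty} {σ : Ty} (M : Tm Γ σ) (ρ : Ren Γ Δ) (η : SEnv Δ),
    evalTm (rename ρ M) η = evalTm M (fun τ v => η τ (ρ τ v))
  | _, _, _, .var v, _, _ => rfl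
  | _, _, _, .lam M, ρ, η => by
      funext a
      show evalTm (rename (Ren.lift ρ _) M) (SEnv.cons a η) = _
      rw [eval_rename M]
      congr 1
      funext τ v
      cases v <;> rfl
  | _, _, _, .app M N, ρ, η => by
      show evalTm (rename ρ M) η (evalTm (rename ρ N) η) = _
      rw [eval_rename M, eval_rename N]
      rfl

theorem eval_subst : ∀ {Γ Δ : List Ty} {σ : Ty} (M : Tm Γ σ) (s : Subst Γ Δ) (η : SEnv Δ),
    evalTm (subst s M) η = evalTm M (fun τ v => evalTm (s τ v) η)
  | _, _, _, .var v, _, _ => rfl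
  | _, _, _, .lam M, s, η => by
      funext a
      show evalTm (subst (Subst.lift s _) M) (SEnv.cons a η) = _
      rw [eval_subst M]
      congr 1
      funext τ v
      cases v with
      | zero => rfl
      | succ w =>
          show evalTm (rename (fun _ u => Var.succ u) (s _ w)) (SEnv.cons a η) = _
          refine (eval_rename _ _ _).trans ?_
          rfl
  | _, _, _, .app M N, s, η => by
      show evalTm (subst s M) η (evalTm (subst s N) η) = _
      rw [eval_subst M, eval_subst N]
      rfl

theorem eval_sound {Γ : List Ty} {σ : Ty} {M N : Tm Γ σ} (h : BetaEta M N) :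
    ∀ η : SEnv Γ, evalTm M η = evalTm N η := by
  induction h with
  | refl => intro η; rfl
  | symm _ ih => intro η; exact (ih η).symm
  | trans _ _ ih₁ ih₂ => intro η; exact (ih₁ η).trans (ih₂ η)
  | app_congr _ _ ihM ihN => intro η; simp only [evalTm]; rw [ihM η, ihN η]
  | lam_congr _ ih => intro η; funext a; exact ih _
  | beta M N =>
      intro η
      show evalTm M (SEnv.cons (evalTm N η) η) = evalTm (subst (Subst.cons N) M) η
      rw [eval_subst]
      congr 1
      funext τ v
      cases v <;> rfl
  | eta M =>
      intro η
      funext a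
      show evalTm M η a = evalTm (rename (fun _ v => Var.succ v) M) (SEnv.cons a η) a
      refine Eq.trans ?_ (congrFun (eval_rename M _ _) a).symm
      rfl

/-! ### Substitution lemmas -/

theorem rename_ext : ∀ {Γ Δ : List Ty} {σ : Ty} (M : Tm Γ σ) (ρ₁ ρ₂ : Ren Γ Δ),
    (∀ τ v, ρ₁ τ v = ρ₂ τ v) → rename ρ₁ M = rename ρ₂ M
  | _, _, _, .var v, _, _, h => by show Tm.var _ = Tm.var _; rw [h]
  | _, _, _, .lam M, ρ₁, ρ₂, h => by
      show Tm.lam _ = Tm.lam _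
      rw [rename_ext M (Ren.lift ρ₁ _) (Ren.lift ρ₂ _)]
      intro τ v
      cases v with
      | zero => rfl
      | succ w => show Var.succ _ = Var.succ _; rw [h]
  | _, _, _, .app M N, ρ₁, ρ₂, h => by
      show Tm.app _ _ = Tm.app _ _
      rw [rename_ext M _ _ h, rename_ext N _ _ h]

theorem rename_rename : ∀ {Γ Δ Θ : List Ty} {σ : Ty} (M : Tm Γ σ) (ρ₁ : Ren Γ Δ) (ρ₂ : Ren Δ Θ),
    rename ρ₂ (rename ρ₁ M) = rename (fun τ v => ρ₂ τ (ρ₁ τ v)) M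
  | _, _, _, _, .var v, _, _ => rfl
  | _, _, _, _, .lam M, ρ₁, ρ₂ => by
      show Tm.lam _ = Tm.lam _
      apply congrArg Tm.lam
      rw [rename_rename M]
      apply rename_ext
      intro τ v
      cases v <;> rfl
  | _, _, _, _, .app M N, ρ₁, ρ₂ => by
      show Tm.app _ _ = Tm.app _ _
      rw [rename_rename M, rename_rename N]

theorem subst_ext : ∀ {Γ Δ : List Ty} {σ : Ty} (M : Tm Γ σ) (s₁ s₂ : Subst Γ Δ),
    (∀ τ v, s₁ τ v = s₂ τ v) → subst s₁ M = subst s₂ M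
  | _, _, _, .var v, _, _, h => h _ v
  | _, _, _, .lam M, s₁, s₂, h => by
      show Tm.lam _ = Tm.lam _
      rw [subst_ext M (Subst.lift s₁ _) (Subst.lift s₂ _)]
      intro τ v
      cases v with
      | zero => rfl
      | succ w => show rename _ _ = rename _ _; rw [h]
  | _, _, _, .app M N, s₁, s₂, h => by
      show Tm.app _ _ = Tm.app _ _
      rw [subst_ext M _ _ h, subst_ext N _ _ h]

theorem subst_rename : ∀ {Γ Δ Θ : List Ty} {σ : Ty} (M : Tm Γ σ) (ρ : Ren Γ Δ) (s : Subst Δ Θ),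
    subst s (rename ρ M) = subst (fun τ v => s τ (ρ τ v)) M
  | _, _, _, _, .var v, _, _ => rfl
  | _, _, _, _, .lam M, ρ, s => by
      show Tm.lam _ = Tm.lam _
      apply congrArg Tm.lam
      rw [subst_rename M]
      apply subst_ext
      intro τ v
      cases v <;> rfl
  | _, _, _, _, .app M N, ρ, s => by
      show Tm.app _ _ = Tm.app _ _
      rw [subst_rename M, subst_rename N]

theorem rename_subst : ∀ {Γ Δ Θ : List Ty} {σ : Ty} (M : Tm Γ σ) (s : Subst Γ Δ) (ρ : Ren Δ Θ),
    rename ρ (subst s M) = subst (fun τ v => rename ρ (s τ v)) M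
  | _, _, _, _, .var v, _, _ => rfl
  | _, _, _, _, .lam M, s, ρ => by
      show Tm.lam _ = Tm.lam _
      apply congrArg Tm.lam
      rw [rename_subst M]
      apply subst_ext
      intro τ v
      cases v with
      | zero => rfl
      | succ w =>
          show rename (Ren.lift ρ _) (rename (fun _ u => Var.succ u) (s _ w)) =
              rename (fun _ u => Var.succ u) (rename ρ (s _ w))
          refine (rename_rename _ _ _).trans (Eq.trans ?_ (rename_rename _ _ _).symm)
          apply rename_ext
          intro τ u
          rfl
  | _, _, _, _, .app M N, s, ρ => by
      show Tm.app _ _ = Tm.app _ _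
      rw [rename_subst M, rename_subst N]

theorem subst_subst : ∀ {Γ Δ Θ : List Ty} {σ : Ty} (M : Tm Γ σ) (s₁ : Subst Γ Δ) (s₂ : Subst Δ Θ),
    subst s₂ (subst s₁ M) = subst (fun τ v => subst s₂ (s₁ τ v)) M
  | _, _, _, _, .var v, _, _ => rfl
  | _, _, _, _, .lam M, s₁, s₂ => by
      show Tm.lam _ = Tm.lam _
      apply congrArg Tm.lam
      rw [subst_subst M]
      apply subst_ext
      intro τ v
      cases v with
      | zero => rfl
      | succ w =>
          show subst (Subst.lift s₂ _) (rename (fun _ u => Var.succ u) (s₁ _ w)) =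
              rename (fun _ u => Var.succ u) (subst s₂ (s₁ _ w))
          refine (subst_rename _ _ _).trans (Eq.trans ?_ (rename_subst _ _ _).symm)
          rfl
  | _, _, _, _, .app M N, s₁, s₂ => by
      show Tm.app _ _ = Tm.app _ _
      rw [subst_subst M, subst_subst N]

theorem subst_id : ∀ {Γ : List Ty} {σ : Ty} (M : Tm Γ σ),
    subst (fun _ v => Tm.var v) M = M
  | _, _, .var v => rfl
  | _, _, .lam M => by
      show Tm.lam _ = Tm.lam _
      rw [subst_ext (s₂ := fun _ v => Tm.var v), subst_id M]
      intro τ v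
      cases v <;> rfl
  | _, _, .app M N => by
      show Tm.app _ _ = Tm.app _ _
      rw [subst_id M, subst_id N]

/-- Extending a substitution with a term for the last variable. -/
def scons {Γ Δ : List Ty} {σ : Ty} (N : Tm Δ σ) (s : Subst Γ Δ) : Subst (σ :: Γ) Δ :=
  fun _ v =>
    match v with
    | .zero => N
    | .succ w => s _ w

theorem subst_cons_lift {Γ Δ : List Ty} {σ τ : Ty} (M : Tm (σ :: Γ) τ) (s : Subst Γ Δ)
    (N : Tm Δ σ) :
    subst (Subst.cons N) (subst (Subst.lift s σ) M) = subst (scons N s) M := by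
  rw [subst_subst]
  apply subst_ext
  intro τ v
  cases v with
  | zero => rfl
  | succ w =>
      show subst (Subst.cons N) (rename (fun _ u => Var.succ u) (s _ w)) = s _ w
      refine (subst_rename _ _ _).trans ?_
      exact subst_id (s _ w)

/-! ### Boolean completeness: every closed term of type `TyB` is βη-equal to a Church boolean -/

/-- The context of two base-type variables. -/
def Ctx2 : List Ty := [Ty.o, Ty.o]

/-- The logical relation for boolean completeness. -/
def LR : (σ : Ty) → Tm Ctx2 σ → Prop
  | .o, M => ∃ v : Var Ctx2 .o, BetaEta M (.var v)
  | .arrow σ τ, M => ∀ N, LR σ N → LR τ (M.app N)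

theorem LR_betaEta : ∀ (σ : Ty) {M M' : Tm Ctx2 σ}, BetaEta M M' → LR σ M → LR σ M'
  | .o, _, _, h, ⟨v, hv⟩ => ⟨v, h.symm.trans hv⟩
  | .arrow σ τ, _, _, h, hP => fun N hN =>
      LR_betaEta τ (BetaEta.app_congr h (BetaEta.refl N)) (hP N hN)

theorem LR_fundamental : ∀ {Γ : List Ty} {σ : Ty} (M : Tm Γ σ) (s : Subst Γ Ctx2),
    (∀ τ v, LR τ (s τ v)) → LR σ (subst s M)
  | _, _, .var v, s, hs => hs _ v
  | _, _, .app M N, s, hs => (LR_fundamental M s hs) _ (LR_fundamental N s hs)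
  | _, _, @Tm.lam _ σ τ M, s, hs => fun N hN => by
      have h1 : LR τ (subst (scons N s) M) := by
        apply LR_fundamental M (scons N s)
        intro τ' v
        cases v with
        | zero => exact hN
        | succ w => exact hs _ w
      have h2 : BetaEta (Tm.app (Tm.lam (subst (Subst.lift s σ) M)) N)
          (subst (scons N s) M) := by
        have := BetaEta.beta (subst (Subst.lift s σ) M) N
        rwa [subst1, subst_cons_lift] at this
      exact LR_betaEta τ h2.symm h1

theorem bool_complete (M : Tm [] TyB) : BetaEta M churchTrue ∨ BetaEta M churchFalse := by
  set body : Tm Ctx2 Ty.o :=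
    Tm.app (Tm.app (rename (fun _ v => Var.succ v) (rename (fun _ v => Var.succ v) M))
      (.var (.succ .zero))) (.var .zero) with hbody
  have hM : BetaEta M (Tm.lam (Tm.lam body)) := by
    have e1 := BetaEta.eta M
    have e2 := BetaEta.eta (Tm.app (rename (fun _ v => Var.succ v) M) (Tm.var Var.zero))
    exact e1.trans (BetaEta.lam_congr e2)
  have hLR : LR Ty.o body := by
    have h := LR_fundamental body (fun _ v => Tm.var v) ?_
    · rwa [subst_id] at h
    · intro τ v
      cases v with
      | zero => exact ⟨Var.zero, BetaEta.refl _⟩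
      | succ w =>
          cases w with
          | zero => exact ⟨Var.succ Var.zero, BetaEta.refl _⟩
          | succ u => exact nomatch u
  obtain ⟨v, hv⟩ := hLR
  have hM2 : BetaEta M (Tm.lam (Tm.lam (Tm.var v))) :=
    hM.trans (BetaEta.lam_congr (BetaEta.lam_congr hv))
  cases v with
  | zero => exact Or.inr hM2
  | succ w =>
      cases w with
      | zero => exact Or.inl hM2
      | succ u => exact nomatch u

/-! ### Semantics of Church strings as a fold, and the decision function -/

/-- The semantic domain of the type `TyW`. -/
abbrev QW : Type := (Bool → Bool) → (Bool → Bool) → Bool → Bool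

/-- The semantic action of one bit on `QW`. -/
def gbit (b : Bool) (q : QW) : QW := fun f0 f1 x => (if b then f1 else f0) (q f0 f1 x)

/-- The semantic empty string. -/
def eW : QW := fun _ _ x => x

theorem eval_churchBits (s : List Bool) (f0 f1 : Bool → Bool) (x : Bool) :
    evalTm (churchBits s)
      (SEnv.cons x (SEnv.cons f1 (SEnv.cons f0 SEnv.nil))) = List.foldr gbit eW s f0 f1 x := by
  induction s with
  | nil => rfl
  | cons b s ih =>
      cases b <;>
        simp only [churchBits, List.foldr, gbit, if_true, if_false, evalTm, ih] <;> rfl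

theorem eval_churchStr (s : List Bool) :
    evalTm (churchStr s) SEnv.nil = List.foldr gbit eW s := by
  funext f0 f1 x
  exact eval_churchBits s f0 f1 x

/-- The acceptance function derived from the set-theoretic semantics of `M`. -/
def accept (M : Tm [] (Ty.arrow TyW TyB)) (q : QW) : Bool := evalTm M SEnv.nil q true false

/-- The (linear-time computable) characteristic function of the language decided by `M`. -/
def chi (M : Tm [] (Ty.arrow TyW TyB)) (s : List Bool) : Bool :=
  accept M (List.foldr gbit eW s)

theorem chi_correct (M : Tm [] (Ty.arrow TyW TyB)) (s : List Bool) :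
    chi M s = true ↔ BetaEta (M.app (churchStr s)) churchTrue := by
  have hval : chi M s = evalTm (M.app (churchStr s)) SEnv.nil true false := by
    show accept M (List.foldr gbit eW s) = evalTm M SEnv.nil (evalTm (churchStr s) SEnv.nil) true false
    rw [eval_churchStr]
    rfl
  constructor
  · intro h
    rcases bool_complete (M.app (churchStr s)) with ht | hf
    · exact ht
    · exfalso
      have := eval_sound hf SEnv.nil
      rw [hval, this] at h
      exact Bool.noConfusion h
  · intro h
    have := eval_sound h SEnv.nil
    rw [hval, this]
    rfl

/-! ### The linear-time two-stack machine -/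

/-- Internal state of the machine: the last popped symbol and the accumulated
semantic transformation. -/
abbrev MSt : Type := Option Bool × (QW → QW)

/-- The (one-label) linear-time machine deciding the language of `M`. -/
def machine (M : Tm [] (Ty.arrow TyW TyB)) : Turing.FinTM2 where
  K := Unit
  k₀ := ()
  k₁ := ()
  Γ := fun _ => Bool
  Λ := Unit
  main := ()
  σ := MSt
  initialState := (none, id)
  m := fun _ =>
    .pop () (fun s ob => (ob, s.2)) <|
      .branch (fun s => s.1.isSome)
        (.load (fun s => (none, s.2 ∘ gbit (s.1.getD false))) (.goto fun _ => ()))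
        (.push () (fun s => accept M (s.2 eW)) (.load (fun _ => (none, id)) .halt))

theorem machine_run (M : Tm [] (Ty.arrow TyW TyB)) :
    ∀ (s : List Bool) (φ : QW → QW) (ob : Option Bool),
      (flip bind (machine M).step)^[s.length + 1]
          (some ⟨some (), (ob, φ), fun _ => s⟩) =
        some ⟨none, (none, id), fun _ => [accept M (φ (List.foldr gbit eW s))]⟩ := by
  intro s
  induction s with
  | nil =>
      intro φ ob
      show flip bind (machine M).step (some _) = _
      rfl
  | cons b s ih =>
      intro φ ob
      rw [Function.iterate_succ_apply]
      have h1 : flip bind (machine M).step (some ⟨some (), (ob, φ), fun _ => b :: s⟩) =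
          some ⟨some (), (none, φ ∘ gbit b), fun _ => s⟩ := by
        rfl
      refine (congrArg _ h1).trans ?_
      have h2 := ih (φ ∘ gbit b) none
      simp only [List.length_cons]
      refine h2.trans ?_
      rfl

/-- The machine `machine M` computes `chi M` in time `n + 1`. -/
def machineComputes (M : Tm [] (Ty.arrow TyW TyB)) :
    Turing.TM2ComputableInTime finEncodingListBool.encode Computability.encodingBoolBool.encode
      (chi M) where
  tm := machine M
  inputAlphabet := Equiv.refl Bool
  outputAlphabet := Equiv.refl Bool
  time := fun n => n + 1
  outputsFun s := by
    refine ⟨⟨s.length + 1, ?_⟩, ?_⟩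
    · have hinit : Turing.initList (machine M)
          (List.map (Equiv.refl Bool).invFun (finEncodingListBool.encode s)) =
          ⟨some (), (none, id), fun _ => s⟩ := by
        show Turing.initList (machine M) (List.map id s) = _
        erw [List.map_id]
        unfold Turing.initList
        congr 1
      have hhalt : Turing.haltList (machine M)
          (List.map (Equiv.refl Bool).invFun
            (Computability.finEncodingBoolBool.encode (chi M s))) =
          ⟨none, (none, id), fun _ => [accept M (List.foldr gbit eW s)]⟩ := by
        show Turing.haltList (machine M) (List.map id [chi M s]) = _
        erw [List.map_id]
        unfold Turing.haltList
        congr 1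
      rw [hinit, Option.map_some, hhalt]
      have := machine_run M s id none
      simpa using this
    · show s.length + 1 ≤ (finEncodingListBool.encode s).length + 1
      exact le_refl _

/-- **Terui.** Every language `𝓛 ⊆ {0,1}*` decided by a closed
simply-typed λ-term `M : 𝐖 → 𝐁` (in the sense that `s ∈ 𝓛` iff
`M s̄ =βη 𝐭𝐫𝐮𝐞`) belongs to `𝐋𝐢𝐧𝐓𝐈𝐌𝐄`: its characteristic function is
computable by a deterministic Turing machine in time linear in the length of
the input. -/
theorem terui_linear_time (M : Tm [] (Ty.arrow TyW TyB)) :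
    ∃ χ : List Bool → Bool,
      (∀ s : List Bool, χ s = true ↔ BetaEta (M.app (churchStr s)) churchTrue) ∧
      ∃ (H : Turing.TM2ComputableInTime finEncodingListBool.encode
          Computability.encodingBoolBool.encode χ) (c : ℕ),
        ∀ n : ℕ, H.time n ≤ c * n + c := by
  refine ⟨chi M, fun s => chi_correct M s, machineComputes M, 1, fun n => ?_⟩
  show n + 1 ≤ 1 * n + 1
  omega
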